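/- arXiv:1511.08110 — 2 statements merged into one kernel-verified Lean document; each statement's English description precedes it below -/
import Mathlib

section
/- Let m, l, ν, p, h, β, γ, e, c, n, q, a, K be real parameters with β ≠ 0, K ≠ 0 and a(γ + ν) + Kβν ≠ 0. Then the endemic prey-only point E₄ = ( 0, 0, a(Kβγ + Kβν − γ² − 2γν − ν²)/(β(a(γ + ν) + Kβν)), (γ + ν)/β ) is an equilibrium of the eco-epidemic food-web model, i.e. the vector field G vanishes at E₄. -/
noncomputable def ecoField (m l ν p h β γ e c n q a K : ℝ) (W V I S : ℝ) :
    ℝ × ℝ × ℝ × ℝ :=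
  (-m * W + p * V * W,
   -l * V + e * S * V - h * V * W + q * I * V,
   β * I * S - n * I * V - γ * I - ν * I,
   a * S * (1 - (S + I) / K) - c * V * S - β * S * I + γ * I)

/-- The endemic prey-only point
`E₄ = (0, 0, a(Kβγ + Kβν − γ² − 2γν − ν²)/(β(a(γ+ν) + Kβν)), (γ+ν)/β)` is an
equilibrium of the eco-epidemic food-web model. -/
theorem eco_equilibrium_E4
    (m l ν p h β γ e c n q a K : ℝ)
    (hβ : β ≠ 0) (hK : K ≠ 0) (hD : a * (γ + ν) + K * β * ν ≠ 0) :
    ecoField m l ν p h β γ e c n q a K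
      0
      0
      (a * (K * β * γ + K * β * ν - γ ^ 2 - 2 * γ * ν - ν ^ 2) /
        (β * (a * (γ + ν) + K * β * ν)))
      ((γ + ν) / β) = (0, 0, 0, 0) := by
  unfold ecoField
  refine Prod.ext ?_ (Prod.ext ?_ (Prod.ext ?_ ?_)) <;> simp only <;> field_simp [show a * (γ + ν) + ν * β * K ≠ 0 by convert hD using 2; ring] <;> ring
end

section
/- Let r, m, q, p, K_Q, K_P be positive real parameters, and set a = pK_Q/(qK_P), b = r√K_Q/(q√K_P), c = m√K_Q/(q√K_P). Suppose Q, P : ℝ → ℝ are differentiable, strictly positive functions satisfying the herd competition system Q'(τ) = r(1 − Q(τ)/K_Q)Q(τ) − q√(Q(τ))√(P(τ)) and P'(τ) = m(1 − P(τ)/K_P)P(τ) − p√(Q(τ))√(P(τ)). Define X(t) = √(Q(τ)/K_Q) and Y(t) = √(P(τ)/K_P) with the rescaled time t = τ·q√K_P/(2√K_Q). Then X and Y are differentiable and satisfy the adimensionalized singularity-free system dX/dt = b(1 − X²)X − Y and dY/dt = c(1 − Y²)Y − aX. -/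
/-- Adimensionalization of the herd competition model: if `Q, P` are positive
differentiable solutions of `Q' = r(1 − Q/K_Q)Q − q√Q√P`,
`P' = m(1 − P/K_P)P − p√Q√P`, then the rescaled variables
`X(t) = √(Q(τ)/K_Q)`, `Y(t) = √(P(τ)/K_P)` with `t = τ·q√K_P/(2√K_Q)` solve the
singularity-free system `X' = b(1 − X²)X − Y`, `Y' = c(1 − Y²)Y − aX`, where
`a = pK_Q/(qK_P)`, `b = r√K_Q/(q√K_P)`, `c = m√K_Q/(q√K_P)`. -/
theorem herd_adimensionalization
    (r m q p KQ KP a b c : ℝ)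
    (hr : 0 < r) (hm : 0 < m) (hq : 0 < q) (hp : 0 < p)
    (hKQ : 0 < KQ) (hKP : 0 < KP)
    (ha : a = p * KQ / (q * KP))
    (hb : b = r * Real.sqrt KQ / (q * Real.sqrt KP))
    (hc : c = m * Real.sqrt KQ / (q * Real.sqrt KP))
    (Q P : ℝ → ℝ)
    (hQpos : ∀ τ, 0 < Q τ) (hPpos : ∀ τ, 0 < P τ)
    (hQ : ∀ τ, HasDerivAt Q
      (r * (1 - Q τ / KQ) * Q τ - q * Real.sqrt (Q τ) * Real.sqrt (P τ)) τ)
    (hP : ∀ τ, HasDerivAt P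
      (m * (1 - P τ / KP) * P τ - p * Real.sqrt (Q τ) * Real.sqrt (P τ)) τ)
    (X Y : ℝ → ℝ)
    (hX : ∀ t, X t = Real.sqrt (Q (2 * Real.sqrt KQ / (q * Real.sqrt KP) * t) / KQ))
    (hY : ∀ t, Y t = Real.sqrt (P (2 * Real.sqrt KQ / (q * Real.sqrt KP) * t) / KP)) :
    (∀ t, HasDerivAt X (b * (1 - (X t) ^ 2) * X t - Y t) t) ∧
    (∀ t, HasDerivAt Y (c * (1 - (Y t) ^ 2) * Y t - a * X t) t) := by
  have ex : ∀ x : ℝ, 0 < x → ∃ s : ℝ, 0 < s ∧ Real.sqrt x = s ∧ x = s ^ 2 :=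
    fun x hx => ⟨Real.sqrt x, Real.sqrt_pos.mpr hx, rfl, (Real.sq_sqrt hx.le).symm⟩
  have hXe : X = fun t => Real.sqrt (Q (2 * Real.sqrt KQ / (q * Real.sqrt KP) * t) / KQ) :=
    funext hX
  have hYe : Y = fun t => Real.sqrt (P (2 * Real.sqrt KQ / (q * Real.sqrt KP) * t) / KP) :=
    funext hY
  constructor
  · intro t
    have hkt : HasDerivAt (fun s : ℝ => 2 * Real.sqrt KQ / (q * Real.sqrt KP) * s)
        (2 * Real.sqrt KQ / (q * Real.sqrt KP)) t := by
      simpa using (hasDerivAt_id t).const_mul (2 * Real.sqrt KQ / (q * Real.sqrt KP))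
    have h1 := (hQ (2 * Real.sqrt KQ / (q * Real.sqrt KP) * t)).comp t hkt
    have h2 := (h1.div_const KQ).sqrt
      (div_pos (hQpos (2 * Real.sqrt KQ / (q * Real.sqrt KP) * t)) hKQ).ne'
    simp only [Function.comp] at h2
    rw [hXe, hYe]
    simp only
    convert h2 using 1
    have hQτ := hQpos (2 * Real.sqrt KQ / (q * Real.sqrt KP) * t)
    have hPτ := hPpos (2 * Real.sqrt KQ / (q * Real.sqrt KP) * t)
    rw [Real.sqrt_div hQτ.le KQ, Real.sqrt_div hPτ.le KP, hb]
    obtain ⟨sQ, hsQ, rQ, eQ⟩ := ex _ hQτ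
    obtain ⟨sP, hsP, rP, eP⟩ := ex _ hPτ
    obtain ⟨sKQ, hsKQ, rKQ, eKQ⟩ := ex KQ hKQ
    obtain ⟨sKP, hsKP, rKP, eKP⟩ := ex KP hKP
    rw [rQ, rP, eQ, rKQ, rKP, eKQ]
    field_simp
  · intro t
    have hkt : HasDerivAt (fun s : ℝ => 2 * Real.sqrt KQ / (q * Real.sqrt KP) * s)
        (2 * Real.sqrt KQ / (q * Real.sqrt KP)) t := by
      simpa using (hasDerivAt_id t).const_mul (2 * Real.sqrt KQ / (q * Real.sqrt KP))
    have h1 := (hP (2 * Real.sqrt KQ / (q * Real.sqrt KP) * t)).comp t hkt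
    have h2 := (h1.div_const KP).sqrt
      (div_pos (hPpos (2 * Real.sqrt KQ / (q * Real.sqrt KP) * t)) hKP).ne'
    simp only [Function.comp] at h2
    rw [hXe, hYe]
    simp only
    convert h2 using 1
    have hQτ := hQpos (2 * Real.sqrt KQ / (q * Real.sqrt KP) * t)
    have hPτ := hPpos (2 * Real.sqrt KQ / (q * Real.sqrt KP) * t)
    rw [Real.sqrt_div hQτ.le KQ, Real.sqrt_div hPτ.le KP, hc, ha]
    obtain ⟨sQ, hsQ, rQ, eQ⟩ := ex _ hQτ
    obtain ⟨sP, hsP, rP, eP⟩ := ex _ hPτ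
    obtain ⟨sKQ, hsKQ, rKQ, eKQ⟩ := ex KQ hKQ
    obtain ⟨sKP, hsKP, rKP, eKP⟩ := ex KP hKP
    rw [rQ, rP, eP, rKQ, rKP, eKQ, eKP]
    field_simp
end
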